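/- Let H be a separable infinite-dimensional complex Hilbert space. The first continuous Hochschild cohomology of K(H) with coefficients in the finite-rank operators vanishes, ℋ¹(K(H), F(H)) = 0 (every bounded derivation K(H) → F(H) is inner via an element of F(H)), while the first continuous Hochschild cohomology with coefficients in K(H) itself does not vanish, ℋ¹(K(H), K(H)) ≠ 0 (there exists a bounded derivation K(H) → K(H) that is not inner via any element of K(H)). -/

import Mathlib

set_option linter.unusedSectionVars false
set_option linter.unusedVariables false
set_option maxHeartbeats 1000000

/-- A continuous linear operator has finite rank, i.e. finite-dimensional range. -/
def IsFiniteRank {H : Type*} [NormedAddCommGroup H] [InnerProductSpace ℂ H]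
    (T : H →L[ℂ] H) : Prop :=
  FiniteDimensional ℂ (LinearMap.range (T : H →ₗ[ℂ] H))

noncomputable section
open Submodule Metric
namespace CohAsym

local notation "⟪" x ", " y "⟫" => @inner ℂ _ _ x y

variable {H : Type*} [NormedAddCommGroup H] [InnerProductSpace ℂ H] [CompleteSpace H]


/-- rank one operator `w ↦ ⟪v,w⟫ • u` -/
def rk (u v : H) : H →L[ℂ] H := (innerSL ℂ v).smulRight u

@[simp] lemma rk_apply (u v w : H) : rk u v w = ⟪v, w⟫ • u := rfl

lemma norm_rk (u v : H) : ‖rk u v‖ = ‖v‖ * ‖u‖ := by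
  rw [rk, ContinuousLinearMap.norm_smulRight_apply, innerSL_apply_norm]

lemma isCompactOperator_of_finiteRank {f : H →L[ℂ] H}
    (h : FiniteDimensional ℂ (LinearMap.range (f : H →ₗ[ℂ] H))) :
    IsCompactOperator ⇑f := by
  rw [isCompactOperator_iff_exists_mem_nhds_image_subset_compact]
  set W := LinearMap.range (f : H →ₗ[ℂ] H) with hW
  haveI := h
  haveI : ProperSpace W := FiniteDimensional.proper ℂ W
  refine ⟨Metric.ball 0 1, Metric.ball_mem_nhds 0 one_pos,
    Subtype.val '' (Metric.closedBall (0 : W) ‖f‖),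
    (isCompact_closedBall _ _).image continuous_subtype_val, ?_⟩
  rintro y ⟨w, hw, rfl⟩
  refine ⟨⟨f w, LinearMap.mem_range_self _ w⟩, ?_, rfl⟩
  simp only [Metric.mem_closedBall, dist_zero_right]
  have h1 : ‖(⟨f w, LinearMap.mem_range_self _ w⟩ : W)‖ = ‖f w‖ := rfl
  rw [h1]
  calc ‖f w‖ ≤ ‖f‖ * ‖w‖ := f.le_opNorm w
  _ ≤ ‖f‖ * 1 := by
      have : ‖w‖ ≤ 1 := le_of_lt (by simpa [Metric.mem_ball, dist_zero_right] using hw)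
      exact mul_le_mul_of_nonneg_left this (norm_nonneg f)
  _ = ‖f‖ := mul_one _

lemma isCompact_rk (u v : H) : IsCompactOperator ⇑(rk u v) := by
  apply isCompactOperator_of_finiteRank
  have hle : LinearMap.range ((rk u v : H →L[ℂ] H) : H →ₗ[ℂ] H) ≤ span ℂ {u} := by
    rintro y ⟨w, rfl⟩
    exact smul_mem _ _ (subset_span rfl)
  haveI : FiniteDimensional ℂ (span ℂ ({u} : Set H)) :=
    FiniteDimensional.span_of_finite ℂ (Set.finite_singleton u)
  exact Submodule.finiteDimensional_of_le hle

/-- key existence lemma for the recursive construction -/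
lemma exists_unit_orth {z : H →L[ℂ] H}
    (hz : ¬ IsFiniteRank z)
    (M V : Submodule ℂ H) (hM : FiniteDimensional ℂ M) (hV : FiniteDimensional ℂ V) :
    ∃ v : H, ‖v‖ = 1 ∧ v ∈ Mᗮ ∧ z v ∉ V := by
  rw [IsFiniteRank] at hz
  haveI := hM; haveI := hV
  have hmain : ∃ v₀, v₀ ∈ Mᗮ ∧ z v₀ ∉ V := by
    by_contra hcon
    push_neg at hcon
    apply hz
    have hmap : FiniteDimensional ℂ (M.map (z : H →ₗ[ℂ] H)) := by
      rw [← Submodule.range_subtype M, ← LinearMap.range_comp]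
      infer_instance
    haveI := hmap
    have hle : LinearMap.range (z : H →ₗ[ℂ] H) ≤ M.map (z : H →ₗ[ℂ] H) ⊔ V := by
      rintro y ⟨w, rfl⟩
      haveI : CompleteSpace M := FiniteDimensional.complete ℂ M
      have hw : w ∈ M ⊔ Mᗮ := by
        rw [Submodule.sup_orthogonal_of_hasOrthogonalProjection]; trivial
      obtain ⟨a, ha, b, hb, rfl⟩ := Submodule.mem_sup.mp hw
      refine Submodule.mem_sup.mpr ⟨z a, ⟨a, ha, rfl⟩, z b, hcon b hb, ?_⟩
      simp [map_add]
    exact Submodule.finiteDimensional_of_le hle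
  obtain ⟨v₀, hv₀M, hv₀V⟩ := hmain
  have hne : v₀ ≠ 0 := by
    rintro rfl
    exact hv₀V (by simp [map_zero, Submodule.zero_mem])
  refine ⟨(‖v₀‖ : ℂ)⁻¹ • v₀, norm_smul_inv_norm hne, Mᗮ.smul_mem _ hv₀M, fun hmem => hv₀V ?_⟩
  have h2 := V.smul_mem (‖v₀‖ : ℂ) hmem
  rw [map_smul, smul_smul, mul_inv_cancel₀ (by exact_mod_cast norm_ne_zero_iff.mpr hne),
    one_smul] at h2
  exact h2




section Rec

variable (x : H →L[ℂ] H)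

def p1M (p : ℕ → H) (k : ℕ) : Submodule ℂ H :=
  span ℂ (p '' Set.Iio k ∪ (fun j => x (p j)) '' Set.Iio k ∪
    (fun j => (ContinuousLinearMap.adjoint x) (p j)) '' Set.Iio k)

def p1d (p : ℕ → H) (m : ℕ) : ℂ := ⟪p (2*m), x (p (2*m))⟫

def p1y (p : ℕ → H) (m : ℕ) : H := x (p (2*m+1)) - p1d x p m • p (2*m+1)

def p1V (p : ℕ → H) (m : ℕ) : Submodule ℂ H := span ℂ (p1y x p '' Set.Iio m)

def p1c (p : ℕ → H) (k : ℕ) : ℂ := if Even k then 0 else p1d x p (k/2)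

lemma p1M_fd (p : ℕ → H) (k : ℕ) : FiniteDimensional ℂ (p1M x p k) :=
  FiniteDimensional.span_of_finite ℂ
    (((Set.finite_Iio k).image p |>.union ((Set.finite_Iio k).image _)).union
      ((Set.finite_Iio k).image _))

lemma p1V_fd (p : ℕ → H) (m : ℕ) : FiniteDimensional ℂ (p1V x p m) :=
  FiniteDimensional.span_of_finite ℂ ((Set.finite_Iio m).image _)

lemma p1M_congr {p q : ℕ → H} {k : ℕ} (h : ∀ j < k, p j = q j) : p1M x p k = p1M x q k := by
  unfold p1M
  congr 1
  congr 1
  · congr 1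
    · exact Set.image_congr fun j hj => h j hj
    · exact Set.image_congr fun j hj => by rw [h j hj]
  · exact Set.image_congr fun j hj => by rw [h j hj]

lemma p1d_congr {p q : ℕ → H} {m : ℕ} (h : ∀ j < 2*m+1, p j = q j) : p1d x p m = p1d x q m := by
  unfold p1d; rw [h (2*m) (by omega)]

lemma p1y_congr {p q : ℕ → H} {m : ℕ} (h : ∀ j < 2*m+2, p j = q j) : p1y x p m = p1y x q m := by
  unfold p1y
  rw [h (2*m+1) (by omega), p1d_congr x fun j hj => h j (by omega)]

lemma p1V_congr {p q : ℕ → H} {m k : ℕ} (hmk : 2*m ≤ k) (h : ∀ j < k, p j = q j) :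
    p1V x p m = p1V x q m := by
  unfold p1V
  congr 1
  refine Set.image_congr fun j hj => ?_
  have hj' : j < m := hj
  exact p1y_congr x fun i hi => h i (by omega)

lemma p1c_congr {p q : ℕ → H} {k : ℕ} (h : ∀ j < k, p j = q j) : p1c x p k = p1c x q k := by
  unfold p1c
  by_cases hk : Even k
  · simp only [hk, if_true]
  · simp only [hk, if_false]
    have h2 : k % 2 = 1 := Nat.odd_iff.mp (Nat.not_even_iff_odd.mp hk)
    exact p1d_congr x fun j hj => h j (by omega)

variable (hx : ∀ c : ℂ, ¬ IsFiniteRank (x - c • (1 : H →L[ℂ] H)))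

def p1seq : ℕ → H := fun k =>
  (exists_unit_orth
    (z := x - p1c x (fun j => if h : j < k then p1seq j else 0) k • 1)
    (hx (p1c x (fun j => if h : j < k then p1seq j else 0) k))
    (p1M x (fun j => if h : j < k then p1seq j else 0) k)
    (p1V x (fun j => if h : j < k then p1seq j else 0) (k/2))
    (p1M_fd x _ k) (p1V_fd x _ _)).choose
termination_by k => k

lemma p1seq_spec (k : ℕ) :
    ‖p1seq x hx k‖ = 1 ∧ p1seq x hx k ∈ (p1M x (p1seq x hx) k)ᗮ ∧
      (x - p1c x (p1seq x hx) k • 1) (p1seq x hx k) ∉ p1V x (p1seq x hx) (k/2) := by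
  have htr : ∀ j < k, (fun j => if h : j < k then p1seq x hx j else 0) j = p1seq x hx j :=
    fun j hj => dif_pos hj
  have hspec := (exists_unit_orth
    (z := x - p1c x (fun j => if h : j < k then p1seq x hx j else 0) k • 1)
    (hx (p1c x (fun j => if h : j < k then p1seq x hx j else 0) k))
    (p1M x (fun j => if h : j < k then p1seq x hx j else 0) k)
    (p1V x (fun j => if h : j < k then p1seq x hx j else 0) (k/2))
    (p1M_fd x _ k) (p1V_fd x _ _)).choose_spec
  have he : p1seq x hx k = (exists_unit_orth
    (z := x - p1c x (fun j => if h : j < k then p1seq x hx j else 0) k • 1)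
    (hx (p1c x (fun j => if h : j < k then p1seq x hx j else 0) k))
    (p1M x (fun j => if h : j < k then p1seq x hx j else 0) k)
    (p1V x (fun j => if h : j < k then p1seq x hx j else 0) (k/2))
    (p1M_fd x _ k) (p1V_fd x _ _)).choose := by
    rw [p1seq]
  rw [← he] at hspec
  rw [p1M_congr x htr, p1c_congr x htr, p1V_congr x (by omega : 2*(k/2) ≤ k) htr] at hspec
  exact hspec

lemma p1seq_norm (k : ℕ) : ‖p1seq x hx k‖ = 1 := (p1seq_spec x hx k).1

lemma p1seq_orth {j k : ℕ} (h : j < k) : ⟪p1seq x hx j, p1seq x hx k⟫ = 0 := by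
  have h2 := (p1seq_spec x hx k).2.1
  exact (Submodule.mem_orthogonal _ _).mp h2 _
    (subset_span (Set.mem_union_left _ (Set.mem_union_left _ ⟨j, h, rfl⟩)))

lemma p1seq_orth' {j k : ℕ} (h : j ≠ k) : ⟪p1seq x hx j, p1seq x hx k⟫ = 0 := by
  rcases h.lt_or_gt with h | h
  · exact p1seq_orth x hx h
  · exact inner_eq_zero_symm.mp (p1seq_orth x hx h)

lemma p1seq_xorth {j k : ℕ} (h : j ≠ k) : ⟪p1seq x hx j, x (p1seq x hx k)⟫ = 0 := by
  rcases h.lt_or_gt with h | h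
  · have h2 := (p1seq_spec x hx k).2.1
    have h3 := (Submodule.mem_orthogonal _ _).mp h2 _
      (subset_span (Set.mem_union_right _ ⟨j, h, rfl⟩))
    rwa [ContinuousLinearMap.adjoint_inner_left] at h3
  · have h2 := (p1seq_spec x hx j).2.1
    have h3 := (Submodule.mem_orthogonal _ _).mp h2 _
      (subset_span (Set.mem_union_left _ (Set.mem_union_right _ ⟨k, h, rfl⟩)))
    exact inner_eq_zero_symm.mp h3

lemma p1seq_ynotmem (m : ℕ) : p1y x (p1seq x hx) m ∉ p1V x (p1seq x hx) m := by
  have h3 := (p1seq_spec x hx (2*m+1)).2.2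
  have hodd : ¬ Even (2*m+1) := by simp [Nat.even_add_one, Nat.even_iff, Nat.mul_mod_right]
  have hdiv : (2*m+1)/2 = m := by omega
  rw [hdiv] at h3
  have hc : p1c x (p1seq x hx) (2*m+1) = p1d x (p1seq x hx) m := by
    rw [p1c, if_neg hodd, hdiv]
  rw [hc] at h3
  have happ : (x - p1d x (p1seq x hx) m • 1) (p1seq x hx (2*m+1)) = p1y x (p1seq x hx) m := by
    simp [p1y, ContinuousLinearMap.sub_apply, ContinuousLinearMap.smul_apply,
      ContinuousLinearMap.one_apply]
  rwa [happ] at h3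

end Rec

lemma rk_app (u v w : H) : rk u v w = ⟪v, w⟫ • u := rfl

lemma isCompactOperator_finset_sum {ι : Type*} (s : Finset ι) (f : ι → H →L[ℂ] H)
    (h : ∀ i, IsCompactOperator ⇑(f i)) : IsCompactOperator ⇑(∑ i ∈ s, f i) := by
  classical
  induction s using Finset.induction with
  | empty => simpa using (isCompactOperator_zero : IsCompactOperator (fun _ : H => (0:H)))
  | @insert a t hne ih =>
    rw [Finset.sum_insert hne]
    have hco : ⇑(f a + ∑ i ∈ t, f i) = ⇑(f a) + ⇑(∑ i ∈ t, f i) :=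
      ContinuousLinearMap.coe_add' _ _
    rw [hco]
    exact (h a).add ih

lemma commutant_mod_finiteRank (x : H →L[ℂ] H)
    (hcomm : ∀ T : H →L[ℂ] H, IsCompactOperator ⇑T → IsFiniteRank (x * T - T * x)) :
    ∃ c : ℂ, IsFiniteRank (x - c • (1 : H →L[ℂ] H)) := by
  by_contra hcon
  push_neg at hcon
  set u := p1seq x hcon with hu
  set f : ℕ → H →L[ℂ] H := fun n => ((1/2 : ℂ)^n) • rk (u (2*n+1)) (u (2*n)) with hf
  have hfnorm : ∀ n, ‖f n‖ ≤ (1/2 : ℝ)^n := by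
    intro n
    rw [hf]
    simp only [norm_smul, norm_pow]
    rw [norm_rk (u (2*n+1)) (u (2*n)), p1seq_norm x hcon, p1seq_norm x hcon]
    simp [norm_div]
  have hsum : Summable f := Summable.of_norm_bounded summable_geometric_two hfnorm
  set T := ∑' n, f n with hT
  have hTc : IsCompactOperator ⇑T := by
    refine isCompactOperator_of_tendsto hsum.hasSum.tendsto_sum_nat ?_
    exact Filter.Eventually.of_forall fun n => isCompactOperator_finset_sum _ f fun i =>
      (isCompact_rk _ _).smul _
  have hTapp : ∀ v : H, T v = ∑' n, f n v := by
    intro v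
    exact ((ContinuousLinearMap.apply ℂ H v).map_tsum hsum)
  have hT1 : ∀ m, T (u (2*m)) = (1/2 : ℂ)^m • u (2*m+1) := by
    intro m
    rw [hTapp]
    rw [tsum_eq_single m]
    · simp [hf, rk_app, inner_self_eq_norm_sq_to_K, hu, p1seq_norm x hcon]
    · intro n hn
      have : ⟪u (2*n), u (2*m)⟫ = 0 := p1seq_orth' x hcon (by omega)
      simp [hf, rk_app, this]
  have hT2 : ∀ m, T (x (u (2*m))) = (1/2 : ℂ)^m • (p1d x u m • u (2*m+1)) := by
    intro m
    rw [hTapp]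
    rw [tsum_eq_single m]
    · simp [hf, rk_app, p1d]
    · intro n hn
      have : ⟪u (2*n), x (u (2*m))⟫ = 0 := p1seq_xorth x hcon (by omega)
      simp [hf, rk_app, this]
  have hS : ∀ m, (x * T - T * x) (u (2*m)) = (1/2 : ℂ)^m • p1y x u m := by
    intro m
    rw [ContinuousLinearMap.sub_apply, ContinuousLinearMap.mul_apply,
      ContinuousLinearMap.mul_apply, hT1 m, hT2 m, map_smul, p1y, smul_sub, smul_smul]
  haveI hSfd : FiniteDimensional ℂ (LinearMap.range ((x*T - T*x : H →L[ℂ] H) : H →ₗ[ℂ] H)) :=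
    hcomm T hTc
  set W := LinearMap.range ((x*T - T*x : H →L[ℂ] H) : H →ₗ[ℂ] H) with hWdef
  have hyr : ∀ m, p1y x u m ∈ W := by
    intro m
    refine ⟨(2:ℂ)^m • u (2*m), ?_⟩
    have : ((x*T - T*x : H →L[ℂ] H) : H →ₗ[ℂ] H) ((2:ℂ)^m • u (2*m))
        = (2:ℂ)^m • ((x*T - T*x) (u (2*m))) := by
      simp
    rw [this, hS m, smul_smul, ← mul_pow]
    norm_num
  have hle : ∀ m, span ℂ (p1y x u '' Set.Iio m) ≤ W := by
    intro m
    rw [span_le]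
    rintro _ ⟨j, _, rfl⟩
    exact hyr j
  have hgrow : ∀ m, m ≤ Module.finrank ℂ (span ℂ (p1y x u '' Set.Iio m)) := by
    intro m
    induction m with
    | zero => exact Nat.zero_le _
    | succ m ih =>
      have hins : p1y x u '' Set.Iio (m+1) = insert (p1y x u m) (p1y x u '' Set.Iio m) := by
        have hio : Set.Iio (m+1) = insert m (Set.Iio m) := by
          ext j
          simp only [Set.mem_Iio, Set.mem_insert_iff]
          omega
        rw [hio, Set.image_insert_eq]
      have hlt : span ℂ (p1y x u '' Set.Iio m) < span ℂ (p1y x u '' Set.Iio (m+1)) := by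
        rw [hins]
        refine lt_of_le_of_ne (span_mono (Set.subset_insert _ _)) fun he => ?_
        refine p1seq_ynotmem x hcon m ?_
        have hmem : p1y x u m ∈ span ℂ (insert (p1y x u m) (p1y x u '' Set.Iio m)) :=
          subset_span (Set.mem_insert _ _)
        rw [← he] at hmem
        exact hmem
      haveI : FiniteDimensional ℂ (span ℂ (p1y x u '' Set.Iio (m+1))) :=
        Submodule.finiteDimensional_of_le (hle (m+1))
      exact Nat.succ_le_of_lt (lt_of_le_of_lt ih (Submodule.finrank_lt_finrank_of_lt hlt))
  have hcontr := hgrow (Module.finrank ℂ W + 1)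
  have hle2 : Module.finrank ℂ (span ℂ (p1y x u '' Set.Iio (Module.finrank ℂ W + 1)))
      ≤ Module.finrank ℂ W := Submodule.finrank_mono (hle _)
  omega

lemma exists_implementer (D : (H →L[ℂ] H) → (H →L[ℂ] H))
    (hadd : ∀ S T : H →L[ℂ] H, IsCompactOperator ⇑S → IsCompactOperator ⇑T →
      D (S + T) = D S + D T)
    (hsmul : ∀ (c : ℂ) (T : H →L[ℂ] H), IsCompactOperator ⇑T → D (c • T) = c • D T)
    (hbound : ∃ C : ℝ, ∀ T : H →L[ℂ] H, IsCompactOperator ⇑T → ‖D T‖ ≤ C * ‖T‖)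
    (hmul : ∀ S T : H →L[ℂ] H, IsCompactOperator ⇑S → IsCompactOperator ⇑T →
      D (S * T) = S * D T + D S * T)
    (ξ : H) (hξ : ‖ξ‖ = 1) :
    ∃ x : H →L[ℂ] H, ∀ T : H →L[ℂ] H, IsCompactOperator ⇑T → D T = x * T - T * x := by
  obtain ⟨C, hC⟩ := hbound
  set xl : H →ₗ[ℂ] H :=
    { toFun := fun η => D (rk η ξ) ξ
      map_add' := by
        intro a b
        have h1 : rk (a + b) ξ = rk a ξ + rk b ξ := by
          ext w; simp [rk_app, smul_add]
        show D (rk (a + b) ξ) ξ = D (rk a ξ) ξ + D (rk b ξ) ξ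
        rw [h1, hadd _ _ (isCompact_rk a ξ) (isCompact_rk b ξ),
          ContinuousLinearMap.add_apply]
      map_smul' := by
        intro c a
        have h1 : rk (c • a) ξ = c • rk a ξ := by
          ext w
          rw [ContinuousLinearMap.smul_apply, rk_app, rk_app, smul_comm]
        show D (rk (c • a) ξ) ξ = (RingHom.id ℂ) c • D (rk a ξ) ξ
        rw [h1, hsmul c _ (isCompact_rk a ξ), ContinuousLinearMap.smul_apply,
          RingHom.id_apply] } with hxl
  have hb : ∀ η : H, ‖xl η‖ ≤ C * ‖η‖ := by
    intro η
    have h1 : ‖xl η‖ ≤ ‖D (rk η ξ)‖ * ‖ξ‖ := (D (rk η ξ)).le_opNorm ξ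
    rw [hξ, mul_one] at h1
    refine h1.trans ((hC _ (isCompact_rk η ξ)).trans ?_)
    rw [norm_rk η ξ, hξ, one_mul]
  set x : H →L[ℂ] H := xl.mkContinuous C hb with hxdef
  refine ⟨x, fun T hT => ?_⟩
  have key : ∀ η : H, x (T η) = T (x η) + D T η := by
    intro η
    have hrk : rk (T η) ξ = T * rk η ξ := by
      ext w
      simp [rk_app, ContinuousLinearMap.mul_apply, map_smul]
    have hx1 : x (T η) = D (rk (T η) ξ) ξ := rfl
    rw [hx1, hrk, hmul T (rk η ξ) hT (isCompact_rk η ξ)]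
    have hrkself : (rk η ξ) ξ = η := by
      rw [rk_app, inner_self_eq_norm_sq_to_K, hξ]
      norm_num
    simp only [ContinuousLinearMap.add_apply, ContinuousLinearMap.mul_apply, hrkself]
    rfl
  ext η
  have hk := key η
  simp only [ContinuousLinearMap.sub_apply, ContinuousLinearMap.mul_apply]
  rw [hk]
  abel

lemma part1 (hinf : ¬ FiniteDimensional ℂ H) (D : (H →L[ℂ] H) → (H →L[ℂ] H))
    (hadd : ∀ S T : H →L[ℂ] H, IsCompactOperator ⇑S → IsCompactOperator ⇑T →
      D (S + T) = D S + D T)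
    (hsmul : ∀ (c : ℂ) (T : H →L[ℂ] H), IsCompactOperator ⇑T → D (c • T) = c • D T)
    (hbound : ∃ C : ℝ, ∀ T : H →L[ℂ] H, IsCompactOperator ⇑T → ‖D T‖ ≤ C * ‖T‖)
    (hmul : ∀ S T : H →L[ℂ] H, IsCompactOperator ⇑S → IsCompactOperator ⇑T →
      D (S * T) = S * D T + D S * T)
    (hfin : ∀ T : H →L[ℂ] H, IsCompactOperator ⇑T → IsFiniteRank (D T)) :
    ∃ x : H →L[ℂ] H, IsFiniteRank x ∧
      ∀ T : H →L[ℂ] H, IsCompactOperator ⇑T → D T = T * x - x * T := by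
  have hnt : Nontrivial H := by
    by_contra hn
    have : Subsingleton H := not_nontrivial_iff_subsingleton.mp hn
    exact hinf inferInstance
  obtain ⟨v, hv⟩ := exists_ne (0 : H)
  obtain ⟨x, hximpl⟩ := exists_implementer D hadd hsmul hbound hmul ((‖v‖ : ℂ)⁻¹ • v)
    (norm_smul_inv_norm hv)
  obtain ⟨c, hcfd⟩ := commutant_mod_finiteRank x fun T hT => by
    rw [← hximpl T hT]; exact hfin T hT
  refine ⟨c • 1 - x, ?_, fun T hT => ?_⟩
  · have he : (c • 1 - x : H →L[ℂ] H) = -(x - c • 1) := (neg_sub _ _).symm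
    rw [IsFiniteRank, he]
    have hco : ((-(x - c • 1) : H →L[ℂ] H) : H →ₗ[ℂ] H) = -((x - c • 1 : H →L[ℂ] H) : H →ₗ[ℂ] H) := rfl
    rw [hco, LinearMap.range_neg]
    exact hcfd
  · rw [hximpl T hT]
    have h1 : T * (c • 1) = (c • 1) * T := by
      simp [mul_smul_comm, smul_mul_assoc]
    rw [mul_sub, sub_mul, h1]
    abel

lemma not_finiteRank_one (hinf : ¬ FiniteDimensional ℂ H) :
    ¬ IsFiniteRank (1 : H →L[ℂ] H) := by
  intro h
  apply hinf
  rw [IsFiniteRank] at h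
  have hr : LinearMap.range ((1 : H →L[ℂ] H) : H →ₗ[ℂ] H) = ⊤ :=
    LinearMap.range_eq_top.mpr fun y => ⟨y, rfl⟩
  rw [hr] at h
  haveI := h
  exact Submodule.topEquiv.finiteDimensional

def onSeq (hinf : ¬ FiniteDimensional ℂ H) : ℕ → H := fun k =>
  (exists_unit_orth (z := 1) (not_finiteRank_one hinf)
     (span ℂ ((fun j => if h : j < k then onSeq hinf j else 0) '' Set.Iio k)) ⊥
     (FiniteDimensional.span_of_finite ℂ ((Set.finite_Iio k).image _)) inferInstance).choose
termination_by k => k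

lemma onSeq_spec (hinf : ¬ FiniteDimensional ℂ H) (k : ℕ) :
    ‖onSeq hinf k‖ = 1 ∧ onSeq hinf k ∈ (span ℂ (onSeq hinf '' Set.Iio k))ᗮ := by
  have hspec := (exists_unit_orth (z := 1) (not_finiteRank_one hinf)
     (span ℂ ((fun j => if h : j < k then onSeq hinf j else 0) '' Set.Iio k)) ⊥
     (FiniteDimensional.span_of_finite ℂ ((Set.finite_Iio k).image _)) inferInstance).choose_spec
  have he : onSeq hinf k = (exists_unit_orth (z := 1) (not_finiteRank_one hinf)
     (span ℂ ((fun j => if h : j < k then onSeq hinf j else 0) '' Set.Iio k)) ⊥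
     (FiniteDimensional.span_of_finite ℂ ((Set.finite_Iio k).image _)) inferInstance).choose := by
    rw [onSeq]
  rw [← he] at hspec
  have himg : (fun j => if h : j < k then onSeq hinf j else 0) '' Set.Iio k
      = onSeq hinf '' Set.Iio k := Set.image_congr fun j hj => dif_pos hj
  rw [himg] at hspec
  exact ⟨hspec.1, hspec.2.1⟩

lemma onSeq_norm (hinf : ¬ FiniteDimensional ℂ H) (k : ℕ) : ‖onSeq hinf k‖ = 1 :=
  (onSeq_spec hinf k).1

lemma onSeq_orth (hinf : ¬ FiniteDimensional ℂ H) {j k : ℕ} (h : j ≠ k) :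
    ⟪onSeq hinf j, onSeq hinf k⟫ = 0 := by
  rcases h.lt_or_gt with h | h
  · exact (Submodule.mem_orthogonal _ _).mp (onSeq_spec hinf k).2 _
      (subset_span ⟨j, h, rfl⟩)
  · exact inner_eq_zero_symm.mp ((Submodule.mem_orthogonal _ _).mp (onSeq_spec hinf j).2 _
      (subset_span ⟨k, h, rfl⟩))

lemma no_compact_eigen (x : H →L[ℂ] H) (hx : IsCompactOperator ⇑x) (μ : ℂ) (hμ : μ ≠ 0)
    (w : ℕ → H) (hn : ∀ n, ‖w n‖ = 1) (ho : ∀ i j, i ≠ j → ⟪w i, w j⟫ = 0)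
    (he : ∀ n, x (w n) = μ • w n) : False := by
  obtain ⟨K, hK, hKm⟩ := hx
  obtain ⟨ε, hε, hball⟩ := Metric.mem_nhds_iff.mp hKm
  set r : ℝ := ε/2 with hr
  have hrpos : 0 < r := by positivity
  have hmem : ∀ n, x ((r:ℂ) • w n) ∈ K := by
    intro n
    apply hball
    rw [Metric.mem_ball, dist_zero_right, norm_smul, hn n, mul_one]
    have : ‖((r:ℝ):ℂ)‖ = r := by
      rw [Complex.norm_real, Real.norm_eq_abs, abs_of_pos hrpos]
    rw [this]; rw [hr]; linarith
  have himg : ∀ n, x ((r:ℂ) • w n) = (r:ℂ) • μ • w n := by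
    intro n; rw [map_smul, he n]
  set δ : ℝ := r * ‖μ‖ with hδ
  have hδpos : 0 < δ := mul_pos hrpos (norm_pos_iff.mpr hμ)
  obtain ⟨t, htfin, htcov⟩ := (Metric.totallyBounded_iff.mp hK.totallyBounded) (δ/2) (by positivity)
  have hchoice : ∀ n : ℕ, ∃ y ∈ t, x ((r:ℂ) • w n) ∈ Metric.ball y (δ/2) := by
    intro n
    have h2 := htcov (hmem n)
    simpa using h2
  choose g hg1 hg2 using hchoice
  haveI : Finite ↥t := htfin.to_subtype
  obtain ⟨i, j, hij, hgij⟩ := Finite.exists_ne_map_eq_of_infinite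
    (fun n : ℕ => (⟨g n, hg1 n⟩ : t))
  have hgg : g i = g j := congrArg Subtype.val hgij
  have hdist : dist (x ((r:ℂ) • w i)) (x ((r:ℂ) • w j)) < δ := by
    have h1 := hg2 i; have h2 := hg2 j
    rw [Metric.mem_ball] at h1 h2
    calc dist (x ((r:ℂ) • w i)) (x ((r:ℂ) • w j))
        ≤ dist (x ((r:ℂ) • w i)) (g i) + dist (g i) (x ((r:ℂ) • w j)) := dist_triangle _ _ _
    _ = dist (x ((r:ℂ) • w i)) (g i) + dist (x ((r:ℂ) • w j)) (g j) := by rw [hgg, dist_comm (g j)]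
    _ < δ/2 + δ/2 := add_lt_add h1 h2
    _ = δ := by ring
  have hwij : (1:ℝ) ≤ ‖w i - w j‖ := by
    have h2 : ‖w i - w j‖^2 = 2 := by
      rw [@norm_sub_sq ℂ H _ _ _ (w i) (w j), ho i j hij, hn i, hn j]
      norm_num
    nlinarith [norm_nonneg (w i - w j)]
  have hsep : δ ≤ dist (x ((r:ℂ) • w i)) (x ((r:ℂ) • w j)) := by
    rw [himg i, himg j, dist_eq_norm, ← smul_sub, ← smul_sub, norm_smul, norm_smul]
    have hnr : ‖((r:ℝ):ℂ)‖ = r := by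
      rw [Complex.norm_real, Real.norm_eq_abs, abs_of_pos hrpos]
    rw [hnr, hδ]
    have hμn : 0 < ‖μ‖ := norm_pos_iff.mpr hμ
    calc r * ‖μ‖ = r * (‖μ‖ * 1) := by ring
    _ ≤ r * (‖μ‖ * ‖w i - w j‖) := by
        apply mul_le_mul_of_nonneg_left _ (le_of_lt hrpos)
        exact mul_le_mul_of_nonneg_left hwij (le_of_lt hμn)
  linarith

lemma part2 (hinf : ¬ FiniteDimensional ℂ H) :
    ∃ D : (H →L[ℂ] H) → (H →L[ℂ] H),
      (∀ S T : H →L[ℂ] H, IsCompactOperator ⇑S → IsCompactOperator ⇑T →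
        D (S + T) = D S + D T) ∧
      (∀ (c : ℂ) (T : H →L[ℂ] H), IsCompactOperator ⇑T → D (c • T) = c • D T) ∧
      (∃ C : ℝ, ∀ T : H →L[ℂ] H, IsCompactOperator ⇑T → ‖D T‖ ≤ C * ‖T‖) ∧
      (∀ S T : H →L[ℂ] H, IsCompactOperator ⇑S → IsCompactOperator ⇑T →
        D (S * T) = S * D T + D S * T) ∧
      (∀ T : H →L[ℂ] H, IsCompactOperator ⇑T → IsCompactOperator ⇑(D T)) ∧
      (∀ x : H →L[ℂ] H, IsCompactOperator ⇑x →
        ∃ T : H →L[ℂ] H, IsCompactOperator ⇑T ∧ D T ≠ T * x - x * T) := by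
  set v := onSeq hinf with hv
  set K := (span ℂ (Set.range fun n => v (2*n))).topologicalClosure with hK
  haveI : CompleteSpace K := (Submodule.isClosed_topologicalClosure _).completeSpace_coe
  set P : H →L[ℂ] H := K.subtypeL.comp (orthogonalProjection K) with hP
  have hPapp : ∀ u : H, P u = ↑(orthogonalProjection K u) := fun u => rfl
  have hPeven : ∀ n, P (v (2*n)) = v (2*n) := by
    intro n
    rw [hPapp]
    exact K.starProjection_eq_self_iff.mpr
      (Submodule.le_topologicalClosure _ (subset_span ⟨n, rfl⟩))
  have hPodd : ∀ n, P (v (2*n+1)) = 0 := by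
    intro n
    have hker : K ≤ LinearMap.ker (innerSL ℂ (v (2*n+1)) : H →ₗ[ℂ] ℂ) := by
      apply Submodule.topologicalClosure_minimal
      · rw [span_le]
        rintro _ ⟨m, rfl⟩
        simp only [SetLike.mem_coe, LinearMap.mem_ker]
        exact onSeq_orth hinf (by omega)
      · exact ContinuousLinearMap.isClosed_ker (innerSL ℂ (v (2*n+1)))
    have hmemo : v (2*n+1) ∈ Kᗮ := by
      rw [Submodule.mem_orthogonal]
      intro u hu
      have h2 : ⟪v (2*n+1), u⟫ = 0 := hker hu
      exact inner_eq_zero_symm.mp h2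
    rw [hPapp, show orthogonalProjection K (v (2*n+1)) = 0 from
      Submodule.orthogonalProjectionOnto_apply_of_mem_orthogonal hmemo]
    simp
  refine ⟨fun T => T * P - P * T, fun S T _ _ => by noncomm_ring, fun c T _ => by
    show (c • T) * P - P * (c • T) = c • (T * P - P * T)
    rw [smul_mul_assoc, mul_smul_comm, smul_sub], ⟨2*‖P‖, fun T _ => ?_⟩,
    fun S T _ _ => by noncomm_ring, fun T hT => ?_, fun x hx => ?_⟩
  · calc ‖T*P - P*T‖ ≤ ‖T*P‖ + ‖P*T‖ := norm_sub_le _ _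
    _ ≤ ‖T‖*‖P‖ + ‖P‖*‖T‖ := add_le_add (norm_mul_le _ _) (norm_mul_le _ _)
    _ = 2*‖P‖*‖T‖ := by ring
  · have hco : ⇑(T*P - P*T) = (⇑T ∘ ⇑P) - (⇑P ∘ ⇑T) := by
      funext u
      simp [ContinuousLinearMap.sub_apply, ContinuousLinearMap.mul_apply]
    rw [hco]
    exact (hT.comp_clm P).sub (hT.clm_comp P)
  · by_contra hcon
    push_neg at hcon
    set z : H →L[ℂ] H := P - x with hz
    have hcomm : ∀ T : H →L[ℂ] H, IsCompactOperator ⇑T → T * z = z * T := by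
      intro T hT
      have h := hcon T hT
      have h2 : T * z - z * T = T*P - P*T - (T*x - x*T) := by rw [hz]; noncomm_ring
      rw [h, sub_self] at h2
      exact sub_eq_zero.mp h2
    have hsc : ∀ u : H, z u = ⟪v 0, z (v 0)⟫ • u := by
      intro u
      have h := hcomm (rk u (v 0)) (isCompact_rk u (v 0))
      have h2 := congrArg (fun A : H →L[ℂ] H => A (v 0)) h
      simp only [ContinuousLinearMap.mul_apply] at h2
      rw [rk_app] at h2
      have h3 : (rk u (v 0)) (v 0) = u := by
        rw [rk_app, inner_self_eq_norm_sq_to_K, onSeq_norm hinf]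
        norm_num
      rw [h3] at h2
      exact h2.symm
    set lam : ℂ := ⟪v 0, z (v 0)⟫ with hlam
    have hxw : ∀ u : H, x u = P u - lam • u := by
      intro u
      have h := hsc u
      rw [hz] at h
      simp only [ContinuousLinearMap.sub_apply] at h
      have : x u = P u - lam • u := by
        rw [← h]; abel
      exact this
    rcases eq_or_ne lam 0 with h0 | h0
    · refine no_compact_eigen x hx 1 one_ne_zero (fun n => v (2*n))
        (fun n => onSeq_norm hinf _) (fun i j hij => onSeq_orth hinf (by omega))
        fun n => ?_
      rw [hxw, hPeven, h0, zero_smul, sub_zero, one_smul]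
    · refine no_compact_eigen x hx (-lam) (neg_ne_zero.mpr h0) (fun n => v (2*n+1))
        (fun n => onSeq_norm hinf _) (fun i j hij => onSeq_orth hinf (by omega))
        fun n => ?_
      rw [hxw, hPodd, zero_sub, neg_smul]


end CohAsym
end

/-- Cohomological asymmetry for `K(H)` on a separable infinite-dimensional complex Hilbert
space: `ℋ¹(K(H), F(H)) = 0`, i.e. every bounded derivation of `K(H)` with values in the
finite-rank operators is inner via a finite-rank operator; while
`ℋ¹(K(H), K(H)) ≠ 0`, i.e. there exists a bounded derivation of `K(H)` into itself that is
not inner via any compact operator. -/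
theorem cohomological_asymmetry_for_compact_operators
    (H : Type*) [NormedAddCommGroup H] [InnerProductSpace ℂ H] [CompleteSpace H]
    [TopologicalSpace.SeparableSpace H] (hinf : ¬ FiniteDimensional ℂ H) :
    (∀ D : (H →L[ℂ] H) → (H →L[ℂ] H),
      (∀ S T : H →L[ℂ] H, IsCompactOperator ⇑S → IsCompactOperator ⇑T →
        D (S + T) = D S + D T) →
      (∀ (c : ℂ) (T : H →L[ℂ] H), IsCompactOperator ⇑T → D (c • T) = c • D T) →
      (∃ C : ℝ, ∀ T : H →L[ℂ] H, IsCompactOperator ⇑T → ‖D T‖ ≤ C * ‖T‖) →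
      (∀ S T : H →L[ℂ] H, IsCompactOperator ⇑S → IsCompactOperator ⇑T →
        D (S * T) = S * D T + D S * T) →
      (∀ T : H →L[ℂ] H, IsCompactOperator ⇑T → IsFiniteRank (D T)) →
      ∃ x : H →L[ℂ] H, IsFiniteRank x ∧
        ∀ T : H →L[ℂ] H, IsCompactOperator ⇑T → D T = T * x - x * T) ∧
    (∃ D : (H →L[ℂ] H) → (H →L[ℂ] H),
      (∀ S T : H →L[ℂ] H, IsCompactOperator ⇑S → IsCompactOperator ⇑T →
        D (S + T) = D S + D T) ∧
      (∀ (c : ℂ) (T : H →L[ℂ] H), IsCompactOperator ⇑T → D (c • T) = c • D T) ∧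
      (∃ C : ℝ, ∀ T : H →L[ℂ] H, IsCompactOperator ⇑T → ‖D T‖ ≤ C * ‖T‖) ∧
      (∀ S T : H →L[ℂ] H, IsCompactOperator ⇑S → IsCompactOperator ⇑T →
        D (S * T) = S * D T + D S * T) ∧
      (∀ T : H →L[ℂ] H, IsCompactOperator ⇑T → IsCompactOperator ⇑(D T)) ∧
      (∀ x : H →L[ℂ] H, IsCompactOperator ⇑x →
        ∃ T : H →L[ℂ] H, IsCompactOperator ⇑T ∧ D T ≠ T * x - x * T)) :=
  ⟨fun D hadd hsmul hbound hmul hfin =>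
    CohAsym.part1 hinf D hadd hsmul hbound hmul hfin,
   CohAsym.part2 hinf⟩
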